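/- Let A be the exterior algebra Λ(A) ⊗ ℤ[U] over ℤ with deg A = 0 − n (i.e. A in homological degree 0, unit 1 in degree n, U in degree 2n−1, n ≥ 3 odd), with the Chas–Sullivan product ∧, and define a degree 1−n coproduct on basis elements by ∨(A∧U^k) = Σ_{j=1}^{k−2} (A∧U^j) ⊗ (A∧U^{k−1−j}) and ∨(U^k) = Σ_{j=1}^{k−2} [(A∧U^j) ⊗ U^{k−1−j} + U^j ⊗ (A∧U^{k−1−j})]. Then composing ∨ with the Thom-signed product ∧_{Th}, where X ∧_{Th} Y = (−1)^{n·deg X + n} X ∧ Y, gives zero on all basis elements A∧U^k and U^k. -/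
import Mathlib


/-!
STATEMENT 14: In H_*(ΛSⁿ) = Λ(A) ⊗ ℤ[U] for n ≥ 3 odd (A in degree 0, unit in
degree n, U in degree 2n−1), with the Chas–Sullivan product ∧ and the coproduct
∨(A∧U^k) = Σ_{j=1}^{k−2} (A∧U^j) ⊗ (A∧U^{k−1−j}),
∨(U^k) = Σ_{j=1}^{k−2} [(A∧U^j) ⊗ U^{k−1−j} + U^j ⊗ (A∧U^{k−1−j})],
composing ∨ with the Thom-signed product X ∧_{Th} Y = (−1)^{n·deg X + n} X ∧ Y
gives zero on all basis elements A∧U^k and U^k.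

The free ℤ-module H_*(ΛSⁿ) is modelled as `(Bool × ℕ) →₀ ℤ`, where `(true, j)`
is the basis element A∧U^j and `(false, j)` is U^j.
-/

/-- Basis element of `Λ(A) ⊗ ℤ[U]`. -/
noncomputable def bas (x : Bool × ℕ) : (Bool × ℕ) →₀ ℤ := Finsupp.single x 1

/-- Homological degree: deg(A∧U^j) = j(n−1), deg(U^j) = (j+1)n − j. -/
def hdeg (n : ℕ) : Bool × ℕ → ℕ
  | (true, j) => j * (n - 1)
  | (false, j) => (j + 1) * n - j

/-- Chas–Sullivan product of basis elements: A∧A = 0, otherwise multiply the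
powers of U and keep A if present. -/
noncomputable def csMul : Bool × ℕ → Bool × ℕ → (Bool × ℕ) →₀ ℤ
  | (true, _), (true, _) => 0
  | (true, j), (false, l) => bas (true, j + l)
  | (false, j), (true, l) => bas (true, j + l)
  | (false, j), (false, l) => bas (false, j + l)

/-- Thom-signed Chas–Sullivan product `X ∧_{Th} Y = (−1)^{n·deg X + n} X ∧ Y`
on basis elements. -/
noncomputable def csMulTh (n : ℕ) (x y : Bool × ℕ) : (Bool × ℕ) →₀ ℤ :=
  ((-1 : ℤ) ^ (n * hdeg n x + n)) • csMul x y

theorem thom_product_coproduct_zero (n : ℕ) (hn : 3 ≤ n) (hodd : Odd n) (k : ℕ) :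
    (∑ j ∈ Finset.Icc 1 (k - 2), csMulTh n (true, j) (true, k - 1 - j)) = 0 ∧
    (∑ j ∈ Finset.Icc 1 (k - 2),
        (csMulTh n (true, j) (false, k - 1 - j) +
          csMulTh n (false, j) (true, k - 1 - j))) = 0 := by
  obtain ⟨m, hm⟩ := hodd
  subst hm
  constructor
  · exact Finset.sum_eq_zero fun j _ => by simp [csMulTh, csMul]
  · refine Finset.sum_eq_zero fun j _ => ?_
    have e1 : Odd ((2*m+1) * hdeg (2*m+1) (true, j) + (2*m+1)) := by
      have h : hdeg (2*m+1) (true, j) = j * (2*m) := by simp [hdeg]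
      rw [h]
      exact ⟨(2*m+1)*(j*m) + m, by ring⟩
    have e2 : Even ((2*m+1) * hdeg (2*m+1) (false, j) + (2*m+1)) := by
      have h : hdeg (2*m+1) (false, j) = 2*(j*m+m)+1 := by
        have h2 : (j+1)*(2*m+1) = 2*(j*m+m)+1 + j := by ring
        simp only [hdeg]
        omega
      rw [h]
      exact ⟨(2*m+1)*(j*m+m+1), by ring⟩
    show ((-1 : ℤ) ^ ((2*m+1) * hdeg (2*m+1) (true, j) + (2*m+1))) • csMul (true, j) (false, k-1-j)
        + ((-1 : ℤ) ^ ((2*m+1) * hdeg (2*m+1) (false, j) + (2*m+1))) • csMul (false, j) (true, k-1-j) = 0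
    rw [e1.neg_one_pow, e2.neg_one_pow]
    simp [csMul]
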